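/- Let G be a simple graph with complement Ḡ having adjacency matrix Ā, and let G ∨ w be the graph obtained from G by adding a new vertex w adjacent to every vertex of G. Then G ∨ w is controllable if and only if G is controllable and det(Ā) ≠ 0 (i.e., Ḡ is not singular). -/

import Mathlib

open Matrix

open scoped Classical in
/-- The 0/1 adjacency matrix of a simple graph, over the integers. -/
noncomputable def adjMat {V : Type*} [Fintype V] (G : SimpleGraph V) : Matrix V V ℤ :=
  Matrix.of fun u v => if G.Adj u v then (1 : ℤ) else 0

/-- The walk matrix of a simple graph on `Fin n`: its `j`-th column is ``A^j e``
where `e` is the all-ones vector. -/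
noncomputable def walkMat {n : ℕ} (G : SimpleGraph (Fin n)) : Matrix (Fin n) (Fin n) ℤ :=
  Matrix.of fun i j => ((adjMat G ^ (j : ℕ)) *ᵥ fun _ => (1 : ℤ)) i

/-- `G ∪ w`: adjoin a new vertex (labelled `0`) adjacent to no vertex of `G`;
the original vertex `i` of `G` becomes `i.succ`. -/
def unionVertex {n : ℕ} (G : SimpleGraph (Fin n)) : SimpleGraph (Fin (n + 1)) where
  Adj u v := ∃ i j : Fin n, u = i.succ ∧ v = j.succ ∧ G.Adj i j
  symm := by
    constructor
    rintro u v ⟨i, j, hu, hv, h⟩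
    exact ⟨j, i, hv, hu, h.symm⟩
  loopless := by
    constructor
    rintro u ⟨i, j, rfl, hv, h⟩
    obtain rfl : i = j := Fin.succ_inj.mp hv
    exact G.loopless.irrefl i h

/-- `G ∨ w`: adjoin a new vertex (labelled `0`) adjacent to every vertex of `G`;
the original vertex `i` of `G` becomes `i.succ`. -/
def joinVertex {n : ℕ} (G : SimpleGraph (Fin n)) : SimpleGraph (Fin (n + 1)) where
  Adj u v := (u = 0 ∧ v ≠ 0) ∨ (v = 0 ∧ u ≠ 0) ∨
    ∃ i j : Fin n, u = i.succ ∧ v = j.succ ∧ G.Adj i j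
  symm := by
    constructor
    rintro u v (⟨h1, h2⟩ | ⟨h1, h2⟩ | ⟨i, j, hu, hv, h⟩)
    · exact Or.inr (Or.inl ⟨h1, h2⟩)
    · exact Or.inl ⟨h1, h2⟩
    · exact Or.inr (Or.inr ⟨j, i, hv, hu, h.symm⟩)
  loopless := by
    constructor
    rintro u (⟨h1, h2⟩ | ⟨h1, h2⟩ | ⟨i, j, rfl, hv, h⟩)
    · exact h2 h1
    · exact h2 h1
    · obtain rfl : i = j := Fin.succ_inj.mp hv
      exact G.loopless.irrefl i h

/-- The sequence `G₀, G₁, G₂, …` where `Gᵢ = G_{i-1} ∪ wᵢ` for odd `i` and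
`Gᵢ = G_{i-1} ∨ wᵢ` for even `i ≥ 2`. -/
def seqGraph {n0 : ℕ} (G0 : SimpleGraph (Fin n0)) : (i : ℕ) → SimpleGraph (Fin (n0 + i))
  | 0 => G0
  | (i + 1) => if (i + 1) % 2 = 1 then unionVertex (seqGraph G0 i) else joinVertex (seqGraph G0 i)

/-- A graph is determined by its generalized spectrum. -/
def IsDGS {n : ℕ} (G : SimpleGraph (Fin n)) : Prop :=
  ∀ H : SimpleGraph (Fin n),
    (adjMat H).charpoly = (adjMat G).charpoly →
    (adjMat Hᶜ).charpoly = (adjMat Gᶜ).charpoly →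
    Nonempty (H ≃g G)

section Aux

variable {m : ℕ}

open scoped Classical in
lemma adjMat_apply {V : Type*} [Fintype V] (G : SimpleGraph V) (u v : V) :
    adjMat G u v = if G.Adj u v then (1 : ℤ) else 0 := rfl

lemma adjMat_compl (H : SimpleGraph (Fin m)) :
    adjMat Hᶜ = (Matrix.of fun _ _ => (1:ℤ)) - 1 - adjMat H := by
  classical
  ext u v
  rw [Matrix.sub_apply, Matrix.sub_apply, adjMat_apply, adjMat_apply]
  simp only [Matrix.of_apply, Matrix.one_apply, SimpleGraph.compl_adj]
  by_cases huv : u = v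
  · subst huv; simp [SimpleGraph.irrefl]
  · by_cases h : H.Adj u v <;> simp [h, huv]

lemma compl_mulVec (H : SimpleGraph (Fin m)) (v : Fin m → ℤ) :
    adjMat Hᶜ *ᵥ v = (∑ k, v k) • (fun _ => (1:ℤ)) - v - adjMat H *ᵥ v := by
  rw [adjMat_compl, Matrix.sub_mulVec, Matrix.sub_mulVec, Matrix.one_mulVec]
  congr 1
  congr 1
  ext u
  simp [Matrix.mulVec, dotProduct]

lemma exists_coeffs (H : SimpleGraph (Fin m)) (j : ℕ) :
    ∃ c : ℕ → ℤ, (∀ i, j < i → c i = 0) ∧ c j = (-1)^j ∧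
      ((adjMat Hᶜ)^j *ᵥ fun _ => (1:ℤ)) =
        ∑ i ∈ Finset.range (j+1), c i • ((adjMat H)^i *ᵥ fun _ => (1:ℤ)) := by
  induction j with
  | zero =>
    refine ⟨fun i => if i = 0 then 1 else 0, ?_, by simp, by simp⟩
    intro i hi
    have : i ≠ 0 := by omega
    simp [this]
  | succ j ih =>
    obtain ⟨c, hc0, hcj, hrec⟩ := ih
    set S : ℤ := ∑ k, ((adjMat Hᶜ)^j *ᵥ fun _ => (1:ℤ)) k with hS
    refine ⟨fun i => (if i = 0 then S else 0) - c i - (if i = 0 then 0 else c (i-1)),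
      ?_, ?_, ?_⟩
    · intro i hi
      have h1 : i ≠ 0 := by omega
      have h2 : c i = 0 := hc0 i (by omega)
      have h3 : c (i-1) = 0 := hc0 (i-1) (by omega)
      simp [h1, h2, h3]
    · have h1 : (j+1) ≠ 0 := by omega
      have h2 : c (j+1) = 0 := hc0 _ (by omega)
      simp [h1, h2, hcj, pow_succ]
    · have hpow : ((adjMat Hᶜ)^(j+1) *ᵥ fun _ => (1:ℤ))
          = adjMat Hᶜ *ᵥ ((adjMat Hᶜ)^j *ᵥ fun _ => (1:ℤ)) := by
        rw [Matrix.mulVec_mulVec, ← pow_succ']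
      rw [hpow, compl_mulVec, ← hS]
      rw [hrec]
      have hmul : adjMat H *ᵥ (∑ i ∈ Finset.range (j+1), c i • ((adjMat H)^i *ᵥ fun _ => (1:ℤ)))
          = ∑ i ∈ Finset.range (j+1), c i • ((adjMat H)^(i+1) *ᵥ fun _ => (1:ℤ)) := by
        rw [← Matrix.mulVecLin_apply, map_sum]
        refine Finset.sum_congr rfl fun i _ => ?_
        rw [_root_.map_smul, Matrix.mulVecLin_apply, Matrix.mulVec_mulVec, ← pow_succ']
      rw [hmul]
      have hfirst : ∑ i ∈ Finset.range (j+2),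
            ((if i = 0 then S else 0) : ℤ) • ((adjMat H)^i *ᵥ fun _ => (1:ℤ))
          = S • (fun _ => (1:ℤ)) := by
        rw [Finset.sum_eq_single 0]
        · simp
        · intro b _ hb; simp [hb]
        · intro h; exact absurd (Finset.mem_range.mpr (by omega)) h
      have hsecond : ∑ i ∈ Finset.range (j+2), c i • ((adjMat H)^i *ᵥ fun _ => (1:ℤ))
          = ∑ i ∈ Finset.range (j+1), c i • ((adjMat H)^i *ᵥ fun _ => (1:ℤ)) := by
        rw [Finset.sum_range_succ, hc0 (j+1) (by omega)]
        simp
      have hthird : ∑ i ∈ Finset.range (j+2),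
            ((if i = 0 then 0 else c (i-1)) : ℤ) • ((adjMat H)^i *ᵥ fun _ => (1:ℤ))
          = ∑ i ∈ Finset.range (j+1), c i • ((adjMat H)^(i+1) *ᵥ fun _ => (1:ℤ)) := by
        rw [Finset.sum_range_succ']
        simp
      calc S • (fun _ => (1:ℤ)) - (∑ i ∈ Finset.range (j+1), c i • ((adjMat H)^i *ᵥ fun _ => (1:ℤ)))
            - ∑ i ∈ Finset.range (j+1), c i • ((adjMat H)^(i+1) *ᵥ fun _ => (1:ℤ))
          = (∑ i ∈ Finset.range (j+2), ((if i = 0 then S else 0) : ℤ) • ((adjMat H)^i *ᵥ fun _ => (1:ℤ)))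
            - (∑ i ∈ Finset.range (j+2), c i • ((adjMat H)^i *ᵥ fun _ => (1:ℤ)))
            - ∑ i ∈ Finset.range (j+2), ((if i = 0 then 0 else c (i-1)) : ℤ) • ((adjMat H)^i *ᵥ fun _ => (1:ℤ)) := by
            rw [hfirst, hsecond, hthird]
        _ = _ := by
            rw [← Finset.sum_sub_distrib, ← Finset.sum_sub_distrib]
            refine Finset.sum_congr rfl fun i _ => ?_
            rw [← sub_smul, ← sub_smul]

lemma walkMat_compl_eq (H : SimpleGraph (Fin m)) :
    ∃ U : Matrix (Fin m) (Fin m) ℤ, U.BlockTriangular id ∧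
      (∀ i, U i i = (-1:ℤ)^(i:ℕ)) ∧ walkMat Hᶜ = walkMat H * U := by
  choose c hc0 hcj hrec using exists_coeffs H
  refine ⟨Matrix.of fun i j => c (j:ℕ) (i:ℕ), ?_, fun i => hcj _, ?_⟩
  · intro i j hlt
    exact hc0 (j:ℕ) (i:ℕ) hlt
  · ext v j
    have h1 : walkMat Hᶜ v j = ∑ i ∈ Finset.range ((j:ℕ)+1),
        c (j:ℕ) i * (((adjMat H)^i *ᵥ fun _ => (1:ℤ)) v) := by
      show ((adjMat Hᶜ)^(j:ℕ) *ᵥ fun _ => (1:ℤ)) v = _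
      rw [hrec]
      simp [Finset.sum_apply]
    have h2 : ∑ i : Fin m, walkMat H v i * (Matrix.of fun (a b : Fin m) => c (b:ℕ) (a:ℕ)) i j
        = ∑ i ∈ Finset.range m, ((adjMat H)^i *ᵥ fun _ => (1:ℤ)) v * c (j:ℕ) i := by
      rw [← Fin.sum_univ_eq_sum_range (fun k => ((adjMat H)^k *ᵥ fun _ => (1:ℤ)) v * c (j:ℕ) k) m]
      rfl
    rw [h1, Matrix.mul_apply, h2]
    rw [Finset.sum_subset (Finset.range_subset_range.mpr (by omega : (j:ℕ)+1 ≤ m))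
      (fun i _ hi => by
        have : (j:ℕ) < i := by simp only [Finset.mem_range] at hi ⊢; omega
        rw [hc0 _ _ this, zero_mul])]
    exact Finset.sum_congr rfl fun i _ => mul_comm _ _

lemma walkMat_compl_det_ne_zero_iff (H : SimpleGraph (Fin m)) :
    (walkMat Hᶜ).det ≠ 0 ↔ (walkMat H).det ≠ 0 := by
  obtain ⟨U, hU, hdiag, heq⟩ := walkMat_compl_eq H
  have hdet : U.det = ∏ i : Fin m, (-1:ℤ)^(i:ℕ) := by
    rw [Matrix.det_of_upperTriangular hU]
    exact Finset.prod_congr rfl fun i _ => hdiag i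
  have hne : U.det ≠ 0 := by
    rw [hdet]
    exact Finset.prod_ne_zero_iff.mpr fun i _ => pow_ne_zero _ (by norm_num)
  rw [heq, Matrix.det_mul, mul_ne_zero_iff]
  exact ⟨fun h => h.1, fun h => ⟨h, hne⟩⟩

lemma adjMat_unionVertex_zero_left (H : SimpleGraph (Fin m)) (v : Fin (m+1)) :
    adjMat (unionVertex H) 0 v = 0 := by
  rw [adjMat_apply, if_neg]
  rintro ⟨i, j, hi, -, -⟩
  exact (Fin.succ_ne_zero i) hi.symm

lemma adjMat_unionVertex_zero_right (H : SimpleGraph (Fin m)) (v : Fin (m+1)) :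
    adjMat (unionVertex H) v 0 = 0 := by
  rw [adjMat_apply, if_neg]
  rintro ⟨i, j, -, hj, -⟩
  exact (Fin.succ_ne_zero j) hj.symm

lemma adjMat_unionVertex_succ (H : SimpleGraph (Fin m)) (i j : Fin m) :
    adjMat (unionVertex H) i.succ j.succ = adjMat H i j := by
  rw [adjMat_apply, adjMat_apply]
  congr 1
  simp only [eq_iff_iff]
  constructor
  · rintro ⟨a, b, ha, hb, h⟩
    obtain rfl : a = i := (Fin.succ_inj.mp ha.symm)
    obtain rfl : b = j := (Fin.succ_inj.mp hb.symm)
    exact h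
  · intro h; exact ⟨i, j, rfl, rfl, h⟩

lemma unionVertex_pow_mulVec (H : SimpleGraph (Fin m)) (j : ℕ) :
    ((adjMat (unionVertex H))^j *ᵥ fun _ => (1:ℤ)) =
      Fin.cons (if j = 0 then 1 else 0) ((adjMat H)^j *ᵥ fun _ => (1:ℤ)) := by
  induction j with
  | zero =>
    ext u
    rw [pow_zero, pow_zero, Matrix.one_mulVec, Matrix.one_mulVec]
    refine Fin.cases ?_ (fun i => ?_) u <;> simp
  | succ j ih =>
    have hpow : ((adjMat (unionVertex H))^(j+1) *ᵥ fun _ => (1:ℤ))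
        = adjMat (unionVertex H) *ᵥ ((adjMat (unionVertex H))^j *ᵥ fun _ => (1:ℤ)) := by
      rw [Matrix.mulVec_mulVec, ← pow_succ']
    rw [hpow, ih]
    ext u
    refine Fin.cases ?_ (fun i => ?_) u
    · rw [Fin.cons_zero]
      simp only [Matrix.mulVec, dotProduct]
      rw [Finset.sum_eq_zero]
      · simp
      · intro k _
        rw [adjMat_unionVertex_zero_left, zero_mul]
    · rw [Fin.cons_succ]
      have hpow2 : ((adjMat H)^(j+1) *ᵥ fun _ => (1:ℤ)) i
          = (adjMat H *ᵥ ((adjMat H)^j *ᵥ fun _ => (1:ℤ))) i := by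
        rw [Matrix.mulVec_mulVec, ← pow_succ']
      rw [hpow2]
      show ∑ k : Fin (m+1), adjMat (unionVertex H) i.succ k *
          (Fin.cons (if j = 0 then (1:ℤ) else 0) ((adjMat H)^j *ᵥ fun _ => (1:ℤ)) :
            Fin (m+1) → ℤ) k
        = ∑ k, adjMat H i k * ((adjMat H)^j *ᵥ fun _ => (1:ℤ)) k
      rw [Fin.sum_univ_succ, adjMat_unionVertex_zero_right, zero_mul, zero_add]
      refine Finset.sum_congr rfl fun k _ => ?_
      rw [adjMat_unionVertex_succ, Fin.cons_succ]

lemma walkMat_unionVertex_det (H : SimpleGraph (Fin m)) :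
    (walkMat (unionVertex H)).det = (adjMat H).det * (walkMat H).det := by
  rw [Matrix.det_succ_row_zero]
  have hzero : ∀ j : Fin (m+1), j ≠ 0 → (-1:ℤ)^(j:ℕ) * walkMat (unionVertex H) 0 j *
      ((walkMat (unionVertex H)).submatrix Fin.succ j.succAbove).det = 0 := by
    intro j hj
    have : walkMat (unionVertex H) 0 j = 0 := by
      show ((adjMat (unionVertex H))^(j:ℕ) *ᵥ fun _ => (1:ℤ)) 0 = 0
      rw [unionVertex_pow_mulVec, Fin.cons_zero, if_neg]
      exact fun h => hj (Fin.ext h)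
    rw [this, mul_zero, zero_mul]
  rw [Finset.sum_eq_single 0 (fun b _ hb => hzero b hb)
    (fun h => absurd (Finset.mem_univ 0) h)]
  have h00 : walkMat (unionVertex H) 0 0 = 1 := by
    show ((adjMat (unionVertex H))^((0: Fin (m+1)):ℕ) *ᵥ fun _ => (1:ℤ)) 0 = 1
    rw [unionVertex_pow_mulVec]
    simp
  rw [h00]
  have hsub : (walkMat (unionVertex H)).submatrix Fin.succ (Fin.succAbove 0)
      = adjMat H * walkMat H := by
    ext i j
    rw [Matrix.submatrix_apply, Fin.succAbove_zero]
    show ((adjMat (unionVertex H))^((j.succ : Fin (m+1)):ℕ) *ᵥ fun _ => (1:ℤ)) i.succ = _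
    rw [unionVertex_pow_mulVec, Fin.cons_succ]
    have : ((j.succ : Fin (m+1)) : ℕ) = (j:ℕ) + 1 := rfl
    rw [this]
    have hpow2 : ((adjMat H)^((j:ℕ)+1) *ᵥ fun _ => (1:ℤ)) i
        = (adjMat H *ᵥ ((adjMat H)^(j:ℕ) *ᵥ fun _ => (1:ℤ))) i := by
      rw [Matrix.mulVec_mulVec, ← pow_succ']
    rw [hpow2, Matrix.mul_apply]
    simp only [Matrix.mulVec, dotProduct]
    rfl
  rw [hsub, Matrix.det_mul]
  simp

lemma compl_joinVertex {n : ℕ} (G : SimpleGraph (Fin n)) :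
    (joinVertex G)ᶜ = unionVertex (Gᶜ) := by
  ext u v
  simp only [SimpleGraph.compl_adj]
  show (u ≠ v ∧ ¬((u = 0 ∧ v ≠ 0) ∨ (v = 0 ∧ u ≠ 0) ∨
      ∃ i j : Fin n, u = i.succ ∧ v = j.succ ∧ G.Adj i j)) ↔
    ∃ i j : Fin n, u = i.succ ∧ v = j.succ ∧ Gᶜ.Adj i j
  constructor
  · rintro ⟨hne, hnot⟩
    push_neg at hnot
    obtain ⟨h1, h2, h3⟩ := hnot
    have hu : u ≠ 0 := fun hu0 => hne (hu0.trans (h1 hu0).symm)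
    have hv : v ≠ 0 := fun hv0 => hne ((h2 hv0).trans hv0.symm)
    obtain ⟨i, rfl⟩ := Fin.exists_succ_eq.mpr hu
    obtain ⟨j, rfl⟩ := Fin.exists_succ_eq.mpr hv
    refine ⟨i, j, rfl, rfl, ?_, ?_⟩
    · exact fun h => hne (by rw [h])
    · exact h3 i j rfl rfl
  · rintro ⟨i, j, rfl, rfl, hne, hnadj⟩
    refine ⟨fun h => hne (Fin.succ_inj.mp h), ?_⟩
    rintro (⟨h1, -⟩ | ⟨h1, -⟩ | ⟨a, b, ha, hb, h⟩)
    · exact Fin.succ_ne_zero i h1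
    · exact Fin.succ_ne_zero j h1
    · obtain rfl : a = i := Fin.succ_inj.mp ha.symm
      obtain rfl : b = j := Fin.succ_inj.mp hb.symm
      exact hnadj h

end Aux

/-- `G ∨ w` is controllable iff `G` is controllable and `Ḡ` is not singular. -/
theorem joinVertex_controllable_iff {n : ℕ} (G : SimpleGraph (Fin n)) :
    (walkMat (joinVertex G)).det ≠ 0 ↔ (walkMat G).det ≠ 0 ∧ (adjMat Gᶜ).det ≠ 0 := by
  rw [← walkMat_compl_det_ne_zero_iff (joinVertex G), compl_joinVertex,
    walkMat_unionVertex_det, mul_ne_zero_iff]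
  have h := walkMat_compl_det_ne_zero_iff (Gᶜ)
  rw [compl_compl] at h
  rw [← h]
  exact and_comm
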